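/- arXiv:2411.17552 — 7 statements merged into one kernel-verified Lean document; each statement's English description precedes it below -/
import Mathlib

section
/- Let α : ℝ → ℝ be locally Lipschitz, monotonically nondecreasing with α(0) = 0, and let h : ℝ → ℝ be differentiable on [0,∞) with h(0) ≥ 0 and h'(t) ≥ −α(h(t)) for all t ≥ 0. Then h(t) ≥ 0 for all t ≥ 0. -/
/-- Scalar CBF comparison lemma: if `h(0) ≥ 0` and `h'(t) ≥ -α(h(t))` for all `t ≥ 0`,
with `α` locally Lipschitz, nondecreasing and `α 0 = 0`, then `h(t) ≥ 0` for all `t ≥ 0`. -/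
theorem cbf_comparison (α h : ℝ → ℝ)
    (hα_lip : LocallyLipschitz α) (hα_mono : Monotone α) (hα0 : α 0 = 0)
    (hdiff : ∀ t ≥ (0:ℝ), DifferentiableAt ℝ h t)
    (h0 : h 0 ≥ 0)
    (hineq : ∀ t ≥ (0:ℝ), deriv h t ≥ -α (h t)) :
    ∀ t ≥ (0:ℝ), h t ≥ 0 := by
  intro t₀ ht₀
  by_contra hneg
  push_neg at hneg
  have hcont : ContinuousOn h (Set.Icc 0 t₀) := fun t ht =>
    (hdiff t ht.1).continuousAt.continuousWithinAt
  set S : Set ℝ := Set.Icc 0 t₀ ∩ h ⁻¹' Set.Ici 0 with hSdef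
  have hS0 : (0:ℝ) ∈ S := ⟨⟨le_refl 0, ht₀⟩, h0⟩
  have hScl : IsClosed S :=
    ContinuousOn.preimage_isClosed_of_isClosed hcont isClosed_Icc isClosed_Ici
  have hScomp : IsCompact S :=
    IsCompact.of_isClosed_subset isCompact_Icc hScl Set.inter_subset_left
  obtain ⟨s, hsS, hsub⟩ := hScomp.exists_isGreatest ⟨0, hS0⟩
  obtain ⟨⟨hs0, hst₀⟩, hhs⟩ := hsS
  have hub := hsub
  -- s < t₀ since h t₀ < 0
  have hslt : s < t₀ := lt_of_le_of_ne hst₀ (by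
    rintro rfl
    exact absurd hhs (not_le.mpr hneg))
  -- h < 0 on (s, t₀]
  have hltneg : ∀ t ∈ Set.Ioc s t₀, h t < 0 := by
    intro t ⟨hts, htt₀⟩
    by_contra hge
    push_neg at hge
    have : t ∈ S := ⟨⟨le_trans hs0 hts.le, htt₀⟩, hge⟩
    exact absurd (hub this) (not_le.mpr hts)
  -- h is monotone on [s, t₀]
  have hmono : MonotoneOn h (Set.Icc s t₀) := by
    apply monotoneOn_of_deriv_nonneg (convex_Icc s t₀)
    · exact hcont.mono (Set.Icc_subset_Icc hs0 le_rfl)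
    · intro x hx
      rw [interior_Icc] at hx
      exact ((hdiff x (le_trans hs0 hx.1.le)).differentiableWithinAt)
    · intro x hx
      rw [interior_Icc] at hx
      have hx0 : (0:ℝ) ≤ x := le_trans hs0 hx.1.le
      have hxneg : h x < 0 := hltneg x ⟨hx.1, hx.2.le⟩
      have : α (h x) ≤ 0 := hα0 ▸ hα_mono hxneg.le
      linarith [hineq x hx0]
  have : h s ≤ h t₀ :=
    hmono (Set.left_mem_Icc.mpr hslt.le) (Set.right_mem_Icc.mpr hslt.le) hslt.le
  exact absurd (le_trans hhs this) (not_le.mpr hneg)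
end

section
/- Let α : ℝ → ℝ be locally Lipschitz, monotonically nondecreasing with α(0) = 0, let ι > 0, and let h : ℝ → ℝ be twice differentiable on [0,∞) with h(0) ≥ 0, h'(0) + ι·h(0) ≥ 0, and h''(t) + ι·h'(t) ≥ −α(h'(t) + ι·h(t)) for all t ≥ 0. Then h'(t) + ι·h(t) ≥ 0 and h(t) ≥ 0 for all t ≥ 0. -/
/-- Barrier lemma: if `f` is differentiable on `[0,∞)`, `f 0 ≥ 0`, and
`f' t ≥ 0` whenever `t ≥ 0` and `f t ≤ 0`, then `f t ≥ 0` for all `t ≥ 0`. -/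
lemma barrier_aux (f : ℝ → ℝ)
    (hf : ∀ t ≥ (0:ℝ), DifferentiableAt ℝ f t)
    (h0 : f 0 ≥ 0)
    (hd : ∀ t ≥ (0:ℝ), f t ≤ 0 → deriv f t ≥ 0) :
    ∀ t ≥ (0:ℝ), f t ≥ 0 := by
  intro t ht
  by_contra hlt
  push_neg at hlt
  have htpos : 0 < t := by
    rcases lt_or_eq_of_le ht with h | h
    · exact h
    · exact absurd (h ▸ h0) (by simpa [← h] using not_le.mpr hlt)
  set S : Set ℝ := Set.Icc 0 t ∩ f ⁻¹' Set.Ici 0 with hS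
  have hcontIcc : ContinuousOn f (Set.Icc 0 t) := fun x hx =>
    ((hf x hx.1).continuousAt).continuousWithinAt
  have hScl : IsClosed S := by
    have h1 : IsClosed (Set.Icc (0:ℝ) t) := isClosed_Icc
    have h2 : IsClosed (Set.Icc 0 t ∩ f ⁻¹' Set.Ici 0) := by
      rcases hcontIcc.preimage_isClosed_of_isClosed h1 isClosed_Ici with h2
      exact h2
    exact h2
  have hSne : S.Nonempty := ⟨0, ⟨le_refl 0, le_of_lt htpos⟩, h0⟩
  have hSbdd : BddAbove S := ⟨t, fun x hx => hx.1.2⟩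
  set s := sSup S with hs
  have hsS : s ∈ S := hScl.csSup_mem hSne hSbdd
  have hs0 : 0 ≤ s := hsS.1.1
  have hst : s ≤ t := hsS.1.2
  have hfs : 0 ≤ f s := hsS.2
  have hslt : s < t := by
    rcases lt_or_eq_of_le hst with h | h
    · exact h
    · exact absurd (h ▸ hfs) (not_le.mpr hlt)
  have hneg : ∀ u, s < u → u ≤ t → f u < 0 := by
    intro u hsu hut
    by_contra hge
    push_neg at hge
    have : u ∈ S := ⟨⟨le_trans hs0 hsu.le, hut⟩, hge⟩
    exact absurd (le_csSup hSbdd this) (not_le.mpr hsu)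
  have hmono : MonotoneOn f (Set.Icc s t) := by
    apply monotoneOn_of_deriv_nonneg (convex_Icc s t)
    · exact fun x hx => ((hf x (le_trans hs0 hx.1)).continuousAt).continuousWithinAt
    · intro x hx
      rw [interior_Icc] at hx
      exact (hf x (le_trans hs0 hx.1.le)).differentiableWithinAt
    · intro x hx
      rw [interior_Icc] at hx
      exact hd x (le_trans hs0 hx.1.le) (hneg x hx.1 hx.2.le).le
  have := hmono ⟨le_refl s, hst⟩ ⟨hst, le_refl t⟩ hst
  linarith

/-- Second-order (HOCBF, relative degree 2) comparison lemma: if `h(0) ≥ 0`,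
`h'(0) + ι·h(0) ≥ 0`, and `h''(t) + ι·h'(t) ≥ -α(h'(t) + ι·h(t))` for all `t ≥ 0`,
then `h'(t) + ι·h(t) ≥ 0` and `h(t) ≥ 0` for all `t ≥ 0`. -/
theorem hocbf_comparison (α h : ℝ → ℝ) (ι : ℝ) (hι : ι > 0)
    (hα_lip : LocallyLipschitz α) (hα_mono : Monotone α) (hα0 : α 0 = 0)
    (hdiff : ∀ t ≥ (0:ℝ), DifferentiableAt ℝ h t)
    (hdiff2 : ∀ t ≥ (0:ℝ), DifferentiableAt ℝ (deriv h) t)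
    (h0 : h 0 ≥ 0)
    (h0' : deriv h 0 + ι * h 0 ≥ 0)
    (hineq : ∀ t ≥ (0:ℝ),
      deriv (deriv h) t + ι * deriv h t ≥ -α (deriv h t + ι * h t)) :
    ∀ t ≥ (0:ℝ), deriv h t + ι * h t ≥ 0 ∧ h t ≥ 0 := by
  set ψ : ℝ → ℝ := fun t => deriv h t + ι * h t with hψ
  have hψdiff : ∀ t ≥ (0:ℝ), DifferentiableAt ℝ ψ t := fun t ht =>
    (hdiff2 t ht).add ((hdiff t ht).const_mul ι)
  have hψderiv : ∀ t ≥ (0:ℝ), deriv ψ t = deriv (deriv h) t + ι * deriv h t := by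
    intro t ht
    rw [hψ]
    rw [deriv_fun_add (hdiff2 t ht) ((hdiff t ht).const_mul ι),
      deriv_const_mul ι (hdiff t ht)]
  have hψnonneg : ∀ t ≥ (0:ℝ), ψ t ≥ 0 := by
    apply barrier_aux ψ hψdiff h0'
    intro t ht hle
    rw [hψderiv t ht]
    have h1 := hineq t ht
    have h2 : α (deriv h t + ι * h t) ≤ α 0 := hα_mono hle
    rw [hα0] at h2
    linarith
  have hhnonneg : ∀ t ≥ (0:ℝ), h t ≥ 0 := by
    apply barrier_aux h hdiff h0
    intro t ht hle
    have h2 := hψnonneg t ht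
    simp only [hψ] at h2
    nlinarith
  exact fun t ht => ⟨hψnonneg t ht, hhnonneg t ht⟩
end

section
/- Let n, p ∈ ℕ, ζ, ζ', D, F, b, G, w₁, w₂ ∈ ℝⁿ, let Y, Ẏ : ℝᵖ → ℝⁿ be linear maps with adjoints Y*, Ẏ*, let θ, θ̂ ∈ ℝᵖ, ξ, ξ̂ ∈ ℝ, and ι, ν, η, ρ_v, ρ_a ≥ 0. If ‖θ − θ̂‖ ≤ ν, |ξ − ξ̂| ≤ η, ‖w₁‖ ≤ ρ_v, and ‖w₂‖ ≤ ρ_a, then 2‖ζ'‖² + 2⟪ζ, D + Ẏθ + ξ·b + G − w₂⟫ + 2ι·⟪ζ, F + Yθ − w₁⟫ ≥ 2⟪ζ, D⟫ + 2⟪ζ, Ẏθ̂⟫ − 2‖Ẏ*ζ‖·ν − 2‖ζ‖·ρ_a + 2ξ̂·⟪ζ, b⟫ − 2|⟪ζ, b⟫|·η + 2⟪ζ, G⟫ + ι·(2⟪ζ, F⟫ + 2⟪ζ, Yθ̂⟫ − 2‖Y*ζ‖·ν − 2‖ζ‖·ρ_v). -/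
open scoped RealInnerProductSpace

/-- Robustification inequality for the second-order collision-avoidance CBF:
the quantity `ḧ/2 + ι·ḣ/2` of `h = ‖ζ‖² - r²` (depending on the unknown `θ`, `ξ`,
`w₁`, `w₂`) is lower-bounded using the estimates `θ̂`, `ξ̂` and the bounds
`ν`, `η`, `ρ_v`, `ρ_a`. -/
theorem collision_cbf_robust_bound (n p : ℕ)
    (ζ ζ' D F b G w₁ w₂ : EuclideanSpace ℝ (Fin n))
    (Y Ydot : EuclideanSpace ℝ (Fin p) →L[ℝ] EuclideanSpace ℝ (Fin n))
    (θ θhat : EuclideanSpace ℝ (Fin p))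
    (ξ ξhat ι ν η ρv ρa : ℝ)
    (hι : 0 ≤ ι) (hν : 0 ≤ ν) (hη : 0 ≤ η) (hρv : 0 ≤ ρv) (hρa : 0 ≤ ρa)
    (hθ : ‖θ - θhat‖ ≤ ν) (hξ : |ξ - ξhat| ≤ η)
    (hw₁ : ‖w₁‖ ≤ ρv) (hw₂ : ‖w₂‖ ≤ ρa) :
    2 * ‖ζ'‖ ^ 2 + 2 * ⟪ζ, D + Ydot θ + ξ • b + G - w₂⟫
        + 2 * ι * ⟪ζ, F + Y θ - w₁⟫ ≥
      2 * ⟪ζ, D⟫ + 2 * ⟪ζ, Ydot θhat⟫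
        - 2 * ‖(ContinuousLinearMap.adjoint Ydot) ζ‖ * ν - 2 * ‖ζ‖ * ρa
        + 2 * ξhat * ⟪ζ, b⟫ - 2 * |⟪ζ, b⟫| * η + 2 * ⟪ζ, G⟫
        + ι * (2 * ⟪ζ, F⟫ + 2 * ⟪ζ, Y θhat⟫
          - 2 * ‖(ContinuousLinearMap.adjoint Y) ζ‖ * ν - 2 * ‖ζ‖ * ρv) := by
  have key : ∀ (T : EuclideanSpace ℝ (Fin p) →L[ℝ] EuclideanSpace ℝ (Fin n)),
      ⟪ζ, T θ⟫ ≥ ⟪ζ, T θhat⟫ - ‖(ContinuousLinearMap.adjoint T) ζ‖ * ν := by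
    intro T
    have h1 : ⟪ζ, T θ⟫ - ⟪ζ, T θhat⟫ = ⟪(ContinuousLinearMap.adjoint T) ζ, θ - θhat⟫ := by
      rw [ContinuousLinearMap.adjoint_inner_left, map_sub, inner_sub_right]
    have h2 : |⟪(ContinuousLinearMap.adjoint T) ζ, θ - θhat⟫| ≤
        ‖(ContinuousLinearMap.adjoint T) ζ‖ * ν := by
      refine (abs_real_inner_le_norm _ _).trans ?_
      exact mul_le_mul_of_nonneg_left hθ (norm_nonneg _)
    have := (abs_le.mp h2).1
    linarith [h1 ▸ this]
  have hYd := key Ydot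
  have hY := key Y
  have hw2 : ⟪ζ, w₂⟫ ≤ ‖ζ‖ * ρa :=
    (real_inner_le_norm _ _).trans (mul_le_mul_of_nonneg_left hw₂ (norm_nonneg _))
  have hw1 : ⟪ζ, w₁⟫ ≤ ‖ζ‖ * ρv :=
    (real_inner_le_norm _ _).trans (mul_le_mul_of_nonneg_left hw₁ (norm_nonneg _))
  have hxi : ξ * ⟪ζ, b⟫ ≥ ξhat * ⟪ζ, b⟫ - |⟪ζ, b⟫| * η := by
    have : |(ξ - ξhat) * ⟪ζ, b⟫| ≤ η * |⟪ζ, b⟫| := by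
      rw [abs_mul]
      exact mul_le_mul_of_nonneg_right hξ (abs_nonneg _)
    have := (abs_le.mp this).1
    nlinarith
  have hsq : 0 ≤ ‖ζ'‖ ^ 2 := sq_nonneg _
  have hιterm : ι * ⟪ζ, F + Y θ - w₁⟫ ≥
      ι * (⟪ζ, F⟫ + ⟪ζ, Y θhat⟫ - ‖(ContinuousLinearMap.adjoint Y) ζ‖ * ν - ‖ζ‖ * ρv) := by
    apply mul_le_mul_of_nonneg_left _ hι
    rw [inner_sub_right, inner_add_right]
    linarith
  rw [inner_sub_right, inner_add_right, inner_add_right, inner_add_right,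
    real_inner_smul_right]
  nlinarith [hιterm]
end

section
/- Let n, m, p ∈ ℕ, constants c, ℓ, ε > 0, and bounds ν, η, ρ_v ≥ 0; define κ(ζ) = c + 1/((‖ζ‖² − ℓ²)² + ε) and, along trajectories, D(t) = (‖ζ(t)‖² − ℓ²)² + ε and a(t) = −8·κ(ζ(t))·(‖ζ(t)‖² − ℓ²)/D(t)². Let α : ℝ → ℝ be locally Lipschitz, nondecreasing, with α(0) = 0. Suppose ζ : ℝ → ℝⁿ and u : ℝ → ℝᵐ are differentiable on [0,∞) and there are functions F, w : ℝ → ℝⁿ, Y : ℝ → (ℝᵖ → ℝⁿ linear), Z : ℝ → ℝᵐ, v : ℝ → ℝᵐ, θ̂ : ℝ → ℝᵖ, ξ̂ : ℝ → ℝ and constants θ ∈ ℝᵖ, ξ ∈ ℝ such that for all t ≥ 0: ζ'(t) = F(t) + Y(t)θ − w(t), u'(t) = v(t) + ξ·Z(t), ‖θ − θ̂(t)‖ ≤ ν, |ξ − ξ̂(t)| ≤ η, ‖w(t)‖ ≤ ρ_v, and a(t)·⟪ζ(t), F(t) + Y(t)θ̂(t)⟫ − |a(t)|·(‖Y(t)*ζ(t)‖·ν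 + ‖ζ(t)‖·ρ_v) − 2⟪u(t), v(t)⟫ − 2ξ̂(t)·⟪u(t), Z(t)⟫ − 2|⟪u(t), Z(t)⟫|·η + α(κ(ζ(t))² − ‖u(t)‖²) ≥ 0. If κ(ζ(0))² − ‖u(0)‖² ≥ 0, then ‖u(t)‖ ≤ κ(ζ(t)) for all t ≥ 0. -/
open scoped RealInnerProductSpace

/-- The adaptive input bound `κ(ζ) = c + 1/((‖ζ‖² - ℓ²)² + ε)`. -/
noncomputable def kappa (n : ℕ) (c ℓ ε : ℝ) (z : EuclideanSpace ℝ (Fin n)) : ℝ :=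
  c + 1 / ((‖z‖ ^ 2 - ℓ ^ 2) ^ 2 + ε)

/-- Input-constraint CBF lemma (Lemma 2): along trajectories of the augmented
system, if the robust admissibility condition holds for all `t ≥ 0` and the
input-constrained CBF `h_u = κ(ζ)² - ‖u‖²` is initially nonnegative, then
`‖u(t)‖ ≤ κ(ζ(t))` for all `t ≥ 0`. -/
theorem input_constraint_forward_invariance (n m p : ℕ)
    (c ℓ ε ν η ρv : ℝ)
    (hc : c > 0) (hℓ : ℓ > 0) (hε : ε > 0)
    (hν : 0 ≤ ν) (hη : 0 ≤ η) (hρv : 0 ≤ ρv)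
    (α : ℝ → ℝ) (hα_lip : LocallyLipschitz α) (hα_mono : Monotone α) (hα0 : α 0 = 0)
    (ζ : ℝ → EuclideanSpace ℝ (Fin n)) (u : ℝ → EuclideanSpace ℝ (Fin m))
    (F w : ℝ → EuclideanSpace ℝ (Fin n))
    (Y : ℝ → (EuclideanSpace ℝ (Fin p) →L[ℝ] EuclideanSpace ℝ (Fin n)))
    (Z v : ℝ → EuclideanSpace ℝ (Fin m))
    (θhat : ℝ → EuclideanSpace ℝ (Fin p)) (ξhat : ℝ → ℝ)
    (θ : EuclideanSpace ℝ (Fin p)) (ξ : ℝ)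
    (hζ' : ∀ t ≥ (0:ℝ), HasDerivAt ζ (F t + Y t θ - w t) t)
    (hu' : ∀ t ≥ (0:ℝ), HasDerivAt u (v t + ξ • Z t) t)
    (hθ : ∀ t ≥ (0:ℝ), ‖θ - θhat t‖ ≤ ν)
    (hξ : ∀ t ≥ (0:ℝ), |ξ - ξhat t| ≤ η)
    (hw : ∀ t ≥ (0:ℝ), ‖w t‖ ≤ ρv)
    (hadm : ∀ t ≥ (0:ℝ),
      (-8 * kappa n c ℓ ε (ζ t) * (‖ζ t‖ ^ 2 - ℓ ^ 2) /
          ((‖ζ t‖ ^ 2 - ℓ ^ 2) ^ 2 + ε) ^ 2) * ⟪ζ t, F t + Y t (θhat t)⟫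
        - |(-8 * kappa n c ℓ ε (ζ t) * (‖ζ t‖ ^ 2 - ℓ ^ 2) /
            ((‖ζ t‖ ^ 2 - ℓ ^ 2) ^ 2 + ε) ^ 2)| *
            (‖(ContinuousLinearMap.adjoint (Y t)) (ζ t)‖ * ν + ‖ζ t‖ * ρv)
        - 2 * ⟪u t, v t⟫ - 2 * ξhat t * ⟪u t, Z t⟫ - 2 * |⟪u t, Z t⟫| * η
        + α (kappa n c ℓ ε (ζ t) ^ 2 - ‖u t‖ ^ 2) ≥ 0)
    (h0 : kappa n c ℓ ε (ζ 0) ^ 2 - ‖u 0‖ ^ 2 ≥ 0) :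
    ∀ t ≥ (0:ℝ), ‖u t‖ ≤ kappa n c ℓ ε (ζ t) := by
  -- the CBF along the trajectory
  set h : ℝ → ℝ := fun t => kappa n c ℓ ε (ζ t) ^ 2 - ‖u t‖ ^ 2 with hh
  set a : ℝ → ℝ := fun t => -8 * kappa n c ℓ ε (ζ t) * (‖ζ t‖ ^ 2 - ℓ ^ 2) /
      ((‖ζ t‖ ^ 2 - ℓ ^ 2) ^ 2 + ε) ^ 2 with ha
  have hD : ∀ t : ℝ, 0 < (‖ζ t‖ ^ 2 - ℓ ^ 2) ^ 2 + ε := fun t => by positivity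
  have hκpos : ∀ t : ℝ, 0 < kappa n c ℓ ε (ζ t) := by
    intro t
    have := hD t
    unfold kappa
    positivity
  -- the derivative of h
  have hderiv : ∀ t ≥ (0:ℝ), HasDerivAt h
      (a t * ⟪ζ t, F t + Y t θ - w t⟫ - 2 * ⟪u t, v t + ξ • Z t⟫) t := by
    intro t ht
    have hz := hζ' t ht
    have huu := hu' t ht
    have hN : HasDerivAt (fun s => ⟪ζ s, ζ s⟫)
        (2 * ⟪ζ t, F t + Y t θ - w t⟫) t := by
      have := hz.inner ℝ hz
      refine this.congr_deriv ?_
      rw [real_inner_comm (F t + Y t θ - w t) (ζ t)]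
      ring
    have hG : HasDerivAt (fun s => ((⟪ζ s, ζ s⟫ - ℓ ^ 2) ^ 2 + ε))
        ((2 : ℕ) * (⟪ζ t, ζ t⟫ - ℓ ^ 2) ^ 1 * (2 * ⟪ζ t, F t + Y t θ - w t⟫)) t :=
      ((hN.sub_const (ℓ ^ 2)).pow 2).add_const ε
    have hGne : ((⟪ζ t, ζ t⟫ - ℓ ^ 2) ^ 2 + ε) ≠ 0 := by
      rw [real_inner_self_eq_norm_sq]; exact (hD t).ne'
    have hKinv : HasDerivAt (fun s => c + ((⟪ζ s, ζ s⟫ - ℓ ^ 2) ^ 2 + ε)⁻¹)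
        (-((2 : ℕ) * (⟪ζ t, ζ t⟫ - ℓ ^ 2) ^ 1 * (2 * ⟪ζ t, F t + Y t θ - w t⟫)) /
          ((⟪ζ t, ζ t⟫ - ℓ ^ 2) ^ 2 + ε) ^ 2) t :=
      (hG.inv hGne).const_add c
    have hK2 : HasDerivAt (fun s => (c + ((⟪ζ s, ζ s⟫ - ℓ ^ 2) ^ 2 + ε)⁻¹) ^ 2)
        ((2 : ℕ) * (c + ((⟪ζ t, ζ t⟫ - ℓ ^ 2) ^ 2 + ε)⁻¹) ^ 1 *
          (-((2 : ℕ) * (⟪ζ t, ζ t⟫ - ℓ ^ 2) ^ 1 * (2 * ⟪ζ t, F t + Y t θ - w t⟫)) /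
            ((⟪ζ t, ζ t⟫ - ℓ ^ 2) ^ 2 + ε) ^ 2)) t := hKinv.pow 2
    have hU : HasDerivAt (fun s => ⟪u s, u s⟫)
        (2 * ⟪u t, v t + ξ • Z t⟫) t := by
      have := huu.inner ℝ huu
      refine this.congr_deriv ?_
      rw [real_inner_comm (v t + ξ • Z t) (u t)]
      ring
    have hmain := hK2.sub hU
    have hfun : (fun s => (c + ((⟪ζ s, ζ s⟫ - ℓ ^ 2) ^ 2 + ε)⁻¹) ^ 2 - ⟪u s, u s⟫) = h := by
      funext s
      rw [hh]
      simp only [kappa, real_inner_self_eq_norm_sq, one_div]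
    rw [show ((fun s => (c + ((⟪ζ s, ζ s⟫ - ℓ ^ 2) ^ 2 + ε)⁻¹) ^ 2) - fun s => ⟪u s, u s⟫) = h from hfun] at hmain
    refine hmain.congr_deriv (Eq.symm ?_)
    rw [ha]
    simp only [kappa, real_inner_self_eq_norm_sq, one_div]
    have hDne : ((‖ζ t‖ ^ 2 - ℓ ^ 2) ^ 2 + ε) ≠ 0 := (hD t).ne'
    field_simp
    ring
  -- the derivative bound
  have hkey : ∀ t ≥ (0:ℝ), 0 ≤
      a t * ⟪ζ t, F t + Y t θ - w t⟫ - 2 * ⟪u t, v t + ξ • Z t⟫ + α (h t) := by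
    intro t ht
    have hadm' := hadm t ht
    have heq : a t * ⟪ζ t, F t + Y t θ - w t⟫ - 2 * ⟪u t, v t + ξ • Z t⟫ =
        (a t * ⟪ζ t, F t + Y t (θhat t)⟫ - 2 * ⟪u t, v t⟫ - 2 * ξhat t * ⟪u t, Z t⟫)
        + a t * ⟪ζ t, Y t (θ - θhat t)⟫ - a t * ⟪ζ t, w t⟫
        - 2 * ((ξ - ξhat t) * ⟪u t, Z t⟫) := by
      simp only [inner_add_right, inner_sub_right, real_inner_smul_right, map_sub]
      ring
    have hb1 : |a t * ⟪ζ t, Y t (θ - θhat t)⟫| ≤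
        |a t| * (‖(ContinuousLinearMap.adjoint (Y t)) (ζ t)‖ * ν) := by
      rw [abs_mul]
      refine mul_le_mul_of_nonneg_left ?_ (abs_nonneg _)
      have : ⟪ζ t, Y t (θ - θhat t)⟫ = ⟪(ContinuousLinearMap.adjoint (Y t)) (ζ t), θ - θhat t⟫ := by
        rw [ContinuousLinearMap.adjoint_inner_left]
      rw [this]
      calc |⟪(ContinuousLinearMap.adjoint (Y t)) (ζ t), θ - θhat t⟫|
          ≤ ‖(ContinuousLinearMap.adjoint (Y t)) (ζ t)‖ * ‖θ - θhat t‖ := abs_real_inner_le_norm _ _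
        _ ≤ ‖(ContinuousLinearMap.adjoint (Y t)) (ζ t)‖ * ν :=
            mul_le_mul_of_nonneg_left (hθ t ht) (norm_nonneg _)
    have hb2 : |a t * ⟪ζ t, w t⟫| ≤ |a t| * (‖ζ t‖ * ρv) := by
      rw [abs_mul]
      refine mul_le_mul_of_nonneg_left ?_ (abs_nonneg _)
      calc |⟪ζ t, w t⟫| ≤ ‖ζ t‖ * ‖w t‖ := abs_real_inner_le_norm _ _
        _ ≤ ‖ζ t‖ * ρv := mul_le_mul_of_nonneg_left (hw t ht) (norm_nonneg _)
    have hb3 : |(ξ - ξhat t) * ⟪u t, Z t⟫| ≤ |⟪u t, Z t⟫| * η := by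
      rw [abs_mul, mul_comm]
      exact mul_le_mul_of_nonneg_left (hξ t ht) (abs_nonneg _)
    have hα_eq : kappa n c ℓ ε (ζ t) ^ 2 - ‖u t‖ ^ 2 = h t := rfl
    have haeq : -8 * kappa n c ℓ ε (ζ t) * (‖ζ t‖ ^ 2 - ℓ ^ 2) /
        ((‖ζ t‖ ^ 2 - ℓ ^ 2) ^ 2 + ε) ^ 2 = a t := rfl
    rw [hα_eq, haeq] at hadm'
    rw [heq]
    have e1 := abs_le.mp hb1
    have e2 := abs_le.mp hb2
    have e3 := abs_le.mp hb3
    linarith [e1.1, e2.2, e3.2, hadm']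
  -- forward invariance: h t ≥ 0 for all t ≥ 0
  have hinv : ∀ t ≥ (0:ℝ), 0 ≤ h t := by
    intro t1 ht1
    by_contra hneg
    push_neg at hneg
    have h0' : 0 ≤ h 0 := h0
    set S : Set ℝ := {t | t ∈ Set.Icc (0:ℝ) t1 ∧ 0 ≤ h t} with hS
    have hScont : ContinuousOn h (Set.Icc 0 t1) := fun x hx =>
      ((hderiv x hx.1).continuousAt).continuousWithinAt
    have hSclosed : IsClosed S := by
      have : S = Set.Icc 0 t1 ∩ h ⁻¹' Set.Ici 0 := by
        ext x; simp [hS, Set.mem_Ici, and_comm]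
      rw [this]
      exact hScont.preimage_isClosed_of_isClosed isClosed_Icc isClosed_Ici
    have h0S : (0:ℝ) ∈ S := ⟨⟨le_refl 0, ht1⟩, h0'⟩
    have hSne : S.Nonempty := ⟨0, h0S⟩
    have hSbdd : BddAbove S := ⟨t1, fun x hx => hx.1.2⟩
    set s := sSup S with hs
    have hsS : s ∈ S := hSclosed.csSup_mem hSne hSbdd
    have hs0 : 0 ≤ s := hsS.1.1
    have hst1 : s ≤ t1 := hsS.1.2
    have hst1' : s < t1 := lt_of_le_of_ne hst1 (by
      intro hcontra
      rw [hcontra] at hsS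
      exact absurd hsS.2 (not_le.mpr hneg))
    have hIoo_neg : ∀ x ∈ Set.Ioo s t1, h x < 0 := by
      intro x hx
      by_contra hxge
      push_neg at hxge
      have : x ∈ S := ⟨⟨hs0.trans hx.1.le, hx.2.le⟩, hxge⟩
      exact absurd (le_csSup hSbdd this) (not_le.mpr hx.1)
    have hmono : MonotoneOn h (Set.Icc s t1) := by
      apply monotoneOn_of_deriv_nonneg (convex_Icc s t1)
      · exact fun x hx => ((hderiv x (hs0.trans hx.1)).continuousAt).continuousWithinAt
      · rw [interior_Icc]
        exact fun x hx => ((hderiv x (hs0.trans hx.1.le)).differentiableAt).differentiableWithinAt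
      · rw [interior_Icc]
        intro x hx
        have hx0 : (0:ℝ) ≤ x := hs0.trans hx.1.le
        rw [(hderiv x hx0).deriv]
        have hneg' : h x ≤ 0 := (hIoo_neg x hx).le
        have : α (h x) ≤ 0 := by
          calc α (h x) ≤ α 0 := hα_mono hneg'
            _ = 0 := hα0
        linarith [hkey x hx0]
    have : h s ≤ h t1 := hmono ⟨le_refl s, hst1⟩ ⟨hst1, le_refl t1⟩ hst1
    linarith [hsS.2]
  -- conclude
  intro t ht
  have hht := hinv t ht
  have hht' : ‖u t‖ ^ 2 ≤ kappa n c ℓ ε (ζ t) ^ 2 := by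
    have : h t = kappa n c ℓ ε (ζ t) ^ 2 - ‖u t‖ ^ 2 := rfl
    linarith [this ▸ hht]
  have hκ := hκpos t
  nlinarith [norm_nonneg (u t), hht', hκ]
end

section
/- Let n, m, p ∈ ℕ, constants r > 0, ι > 0, and bounds ν, η, ρ_v, ρ_a ≥ 0; let α : ℝ → ℝ be locally Lipschitz, nondecreasing, with α(0) = 0. Suppose ζ : ℝ → ℝⁿ is twice differentiable on [0,∞) and there are functions F, D, b, G, w₁, w₂ : ℝ → ℝⁿ, Y, Ẏ : ℝ → (ℝᵖ → ℝⁿ linear), θ̂ : ℝ → ℝᵖ, ξ̂ : ℝ → ℝ and constants θ ∈ ℝᵖ, ξ ∈ ℝ such that for all t ≥ 0: ζ'(t) = F(t) + Y(t)θ − w₁(t), ζ''(t) = D(t) + Ẏ(t)θ + ξ·b(t) + G(t) − w₂(t), ‖θ − θ̂(t)‖ ≤ ν, |ξ − ξ̂(t)| ≤ η, ‖w₁(t)‖ ≤ ρ_v, ‖w₂(t)‖ ≤ ρ_a, and 2⟪ζ(t), D(t)⟫ + 2⟪ζ(t), Ẏ(t)θ̂(t)⟫ − 2‖Ẏ(t)*ζ(t)‖·ν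 − 2‖ζ(t)‖·ρ_a + 2ξ̂(t)·⟪ζ(t), b(t)⟫ − 2|⟪ζ(t), b(t)⟫|·η + 2⟪ζ(t), G(t)⟫ + ι·(2⟪ζ(t), F(t)⟫ + 2⟪ζ(t), Y(t)θ̂(t)⟫ − 2‖Y(t)*ζ(t)‖·ν − 2‖ζ(t)‖·ρ_v) + α(2⟪ζ(t), ζ'(t)⟫ + ι·(‖ζ(t)‖² − r²)) ≥ 0. If ‖ζ(0)‖² − r² ≥ 0 and 2⟪ζ(0), ζ'(0)⟫ + ι·(‖ζ(0)‖² − r²) ≥ 0, then ‖ζ(t)‖ ≥ r for all t ≥ 0. -/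
open scoped RealInnerProductSpace

/-- If `φ` is differentiable on `[0,∞)` with derivative `dφ`, `dφ t ≥ 0` whenever
`φ t < 0`, and `φ 0 ≥ 0`, then `φ ≥ 0` on `[0,∞)`. -/
lemma nonneg_of_deriv_nonneg_of_neg (φ dφ : ℝ → ℝ)
    (hd : ∀ t ≥ (0:ℝ), HasDerivAt φ (dφ t) t)
    (hpos : ∀ t ≥ (0:ℝ), φ t < 0 → 0 ≤ dφ t)
    (h0 : 0 ≤ φ 0) : ∀ t ≥ (0:ℝ), 0 ≤ φ t := by
  intro t₁ ht₁
  by_contra hneg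
  push_neg at hneg
  have hcont : ContinuousOn φ (Set.Icc 0 t₁) := fun x hx =>
    (hd x hx.1).continuousAt.continuousWithinAt
  set S : Set ℝ := Set.Icc 0 t₁ ∩ φ ⁻¹' Set.Ici 0 with hS
  have hScl : IsClosed S :=
    hcont.preimage_isClosed_of_isClosed isClosed_Icc isClosed_Ici
  have hScpt : IsCompact S := (isCompact_Icc).of_isClosed_subset hScl Set.inter_subset_left
  have h0S : (0:ℝ) ∈ S := ⟨⟨le_refl 0, ht₁⟩, h0⟩
  have hsmem : sSup S ∈ S := hScpt.sSup_mem ⟨0, h0S⟩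
  set s := sSup S with hs
  have hs0 : 0 ≤ s := hsmem.1.1
  have hst : s ≤ t₁ := hsmem.1.2
  have hφs : 0 ≤ φ s := hsmem.2
  have hslt : s < t₁ := hst.lt_of_ne (fun heq => (not_le.2 hneg) (heq ▸ hφs))
  have hneg' : ∀ t ∈ Set.Ioc s t₁, φ t < 0 := by
    intro t ht
    by_contra h
    push_neg at h
    have : t ∈ S := ⟨⟨hs0.trans ht.1.le, ht.2⟩, h⟩
    exact absurd (le_csSup ⟨t₁, fun x hx => hx.1.2⟩ this) (not_le.2 ht.1)
  have hmono : MonotoneOn φ (Set.Icc s t₁) := by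
    apply monotoneOn_of_deriv_nonneg (convex_Icc s t₁)
    · exact fun x hx => (hd x (hs0.trans hx.1)).continuousAt.continuousWithinAt
    · intro x hx
      rw [interior_Icc] at hx
      exact (hd x (hs0.trans hx.1.le)).differentiableAt.differentiableWithinAt
    · intro x hx
      rw [interior_Icc] at hx
      have hx0 : (0:ℝ) ≤ x := hs0.trans hx.1.le
      rw [(hd x hx0).deriv]
      exact hpos x hx0 (hneg' x ⟨hx.1, hx.2.le⟩)
  have := hmono ⟨le_refl s, hst⟩ ⟨hst, le_refl t₁⟩ hst
  linarith

set_option maxHeartbeats 1000000 in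
/-- Collision-avoidance CBF lemma (Lemma 3): with `ζ` the pursuer–obstacle relative
position and `h = ‖ζ‖² - r²` the relative-degree-2 CBF, if the robust admissibility
condition holds for all `t ≥ 0` and `h(0) ≥ 0`, `ḣ(0) + ι·h(0) ≥ 0`, then
`‖ζ(t)‖ ≥ r` for all `t ≥ 0`. -/
theorem collision_avoidance_forward_invariance (n m p : ℕ)
    (r ι ν η ρv ρa : ℝ)
    (hr : r > 0) (hι : ι > 0)
    (hν : 0 ≤ ν) (hη : 0 ≤ η) (hρv : 0 ≤ ρv) (hρa : 0 ≤ ρa)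
    (α : ℝ → ℝ) (hα_lip : LocallyLipschitz α) (hα_mono : Monotone α) (hα0 : α 0 = 0)
    (ζ dζ : ℝ → EuclideanSpace ℝ (Fin n))
    (F D b G w₁ w₂ : ℝ → EuclideanSpace ℝ (Fin n))
    (Y Ydot : ℝ → (EuclideanSpace ℝ (Fin p) →L[ℝ] EuclideanSpace ℝ (Fin n)))
    (θhat : ℝ → EuclideanSpace ℝ (Fin p)) (ξhat : ℝ → ℝ)
    (θ : EuclideanSpace ℝ (Fin p)) (ξ : ℝ)
    (hζ' : ∀ t ≥ (0:ℝ), HasDerivAt ζ (dζ t) t)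
    (hζ'eq : ∀ t ≥ (0:ℝ), dζ t = F t + Y t θ - w₁ t)
    (hζ'' : ∀ t ≥ (0:ℝ), HasDerivAt dζ (D t + Ydot t θ + ξ • b t + G t - w₂ t) t)
    (hθ : ∀ t ≥ (0:ℝ), ‖θ - θhat t‖ ≤ ν)
    (hξ : ∀ t ≥ (0:ℝ), |ξ - ξhat t| ≤ η)
    (hw₁ : ∀ t ≥ (0:ℝ), ‖w₁ t‖ ≤ ρv)
    (hw₂ : ∀ t ≥ (0:ℝ), ‖w₂ t‖ ≤ ρa)
    (hadm : ∀ t ≥ (0:ℝ),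
      2 * ⟪ζ t, D t⟫ + 2 * ⟪ζ t, Ydot t (θhat t)⟫
        - 2 * ‖(ContinuousLinearMap.adjoint (Ydot t)) (ζ t)‖ * ν - 2 * ‖ζ t‖ * ρa
        + 2 * ξhat t * ⟪ζ t, b t⟫ - 2 * |⟪ζ t, b t⟫| * η + 2 * ⟪ζ t, G t⟫
        + ι * (2 * ⟪ζ t, F t⟫ + 2 * ⟪ζ t, Y t (θhat t)⟫
          - 2 * ‖(ContinuousLinearMap.adjoint (Y t)) (ζ t)‖ * ν - 2 * ‖ζ t‖ * ρv)
        + α (2 * ⟪ζ t, dζ t⟫ + ι * (‖ζ t‖ ^ 2 - r ^ 2)) ≥ 0)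
    (h0 : ‖ζ 0‖ ^ 2 - r ^ 2 ≥ 0)
    (h0' : 2 * ⟪ζ 0, dζ 0⟫ + ι * (‖ζ 0‖ ^ 2 - r ^ 2) ≥ 0) :
    ∀ t ≥ (0:ℝ), ‖ζ t‖ ≥ r := by
  -- the CBF and its chained function
  set h : ℝ → ℝ := fun t => ‖ζ t‖ ^ 2 - r ^ 2 with hh
  set ψ : ℝ → ℝ := fun t => 2 * ⟪ζ t, dζ t⟫ + ι * (‖ζ t‖ ^ 2 - r ^ 2) with hψ
  -- derivative of h
  have hhder : ∀ t ≥ (0:ℝ), HasDerivAt h (2 * ⟪ζ t, dζ t⟫) t := by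
    intro t ht
    have h1 : HasDerivAt (fun t => ⟪ζ t, ζ t⟫) (⟪ζ t, dζ t⟫ + ⟪dζ t, ζ t⟫) t :=
      (hζ' t ht).inner (𝕜 := ℝ) (hζ' t ht)
    have h2 : HasDerivAt (fun t => ‖ζ t‖ ^ 2 - r ^ 2) (⟪ζ t, dζ t⟫ + ⟪dζ t, ζ t⟫) t := by
      simp only [← real_inner_self_eq_norm_sq]
      exact h1.sub_const _
    convert h2 using 1
    rw [real_inner_comm (dζ t) (ζ t)]
    ring
  -- derivative of ψ
  have hψder : ∀ t ≥ (0:ℝ), HasDerivAt ψ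
      (2 * (⟪ζ t, D t + Ydot t θ + ξ • b t + G t - w₂ t⟫ + ⟪dζ t, dζ t⟫)
        + ι * (2 * ⟪ζ t, dζ t⟫)) t := by
    intro t ht
    have h1 : HasDerivAt (fun t => ⟪ζ t, dζ t⟫)
        (⟪ζ t, D t + Ydot t θ + ξ • b t + G t - w₂ t⟫ + ⟪dζ t, dζ t⟫) t :=
      (hζ' t ht).inner (𝕜 := ℝ) (hζ'' t ht)
    exact (h1.const_mul 2).add ((hhder t ht).const_mul ι)
  -- key inequality: ψ' + α(ψ) ≥ 0, hence ψ' ≥ 0 when ψ ≤ 0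
  have hψnonneg : ∀ t ≥ (0:ℝ), 0 ≤ ψ t := by
    apply nonneg_of_deriv_nonneg_of_neg ψ _ hψder _ h0'
    intro t ht hψt
    have hadm' := hadm t ht
    -- expand the inner products
    have hexp : ⟪ζ t, D t + Ydot t θ + ξ • b t + G t - w₂ t⟫
        = ⟪ζ t, D t⟫ + ⟪ζ t, Ydot t θ⟫ + ξ * ⟪ζ t, b t⟫ + ⟪ζ t, G t⟫ - ⟪ζ t, w₂ t⟫ := by
      rw [inner_sub_right, inner_add_right, inner_add_right, inner_add_right,
        real_inner_smul_right]
    have hexp2 : ⟪ζ t, dζ t⟫ = ⟪ζ t, F t⟫ + ⟪ζ t, Y t θ⟫ - ⟪ζ t, w₁ t⟫ := by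
      rw [hζ'eq t ht, inner_sub_right, inner_add_right]
    -- bounds
    have hb1 : ⟪ζ t, Ydot t θ⟫ ≥ ⟪ζ t, Ydot t (θhat t)⟫
        - ‖(ContinuousLinearMap.adjoint (Ydot t)) (ζ t)‖ * ν := by
      have : ⟪ζ t, Ydot t θ⟫ - ⟪ζ t, Ydot t (θhat t)⟫
          = ⟪(ContinuousLinearMap.adjoint (Ydot t)) (ζ t), θ - θhat t⟫ := by
        rw [ContinuousLinearMap.adjoint_inner_left, map_sub, inner_sub_right]
      have h2 := abs_real_inner_le_norm ((ContinuousLinearMap.adjoint (Ydot t)) (ζ t)) (θ - θhat t)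
      have h3 : ‖(ContinuousLinearMap.adjoint (Ydot t)) (ζ t)‖ * ‖θ - θhat t‖
          ≤ ‖(ContinuousLinearMap.adjoint (Ydot t)) (ζ t)‖ * ν :=
        mul_le_mul_of_nonneg_left (hθ t ht) (norm_nonneg _)
      have h4 := abs_le.1 (h2.trans h3)
      linarith [this, h4.1]
    have hb2 : ⟪ζ t, Y t θ⟫ ≥ ⟪ζ t, Y t (θhat t)⟫
        - ‖(ContinuousLinearMap.adjoint (Y t)) (ζ t)‖ * ν := by
      have : ⟪ζ t, Y t θ⟫ - ⟪ζ t, Y t (θhat t)⟫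
          = ⟪(ContinuousLinearMap.adjoint (Y t)) (ζ t), θ - θhat t⟫ := by
        rw [ContinuousLinearMap.adjoint_inner_left, map_sub, inner_sub_right]
      have h2 := abs_real_inner_le_norm ((ContinuousLinearMap.adjoint (Y t)) (ζ t)) (θ - θhat t)
      have h3 : ‖(ContinuousLinearMap.adjoint (Y t)) (ζ t)‖ * ‖θ - θhat t‖
          ≤ ‖(ContinuousLinearMap.adjoint (Y t)) (ζ t)‖ * ν :=
        mul_le_mul_of_nonneg_left (hθ t ht) (norm_nonneg _)
      have h4 := abs_le.1 (h2.trans h3)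
      linarith [this, h4.1]
    have hb3 : -⟪ζ t, w₂ t⟫ ≥ -(‖ζ t‖ * ρa) := by
      have h2 := abs_real_inner_le_norm (ζ t) (w₂ t)
      have h3 : ‖ζ t‖ * ‖w₂ t‖ ≤ ‖ζ t‖ * ρa :=
        mul_le_mul_of_nonneg_left (hw₂ t ht) (norm_nonneg _)
      have h4 := abs_le.1 (h2.trans h3)
      linarith [h4.2]
    have hb4 : -⟪ζ t, w₁ t⟫ ≥ -(‖ζ t‖ * ρv) := by
      have h2 := abs_real_inner_le_norm (ζ t) (w₁ t)
      have h3 : ‖ζ t‖ * ‖w₁ t‖ ≤ ‖ζ t‖ * ρv :=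
        mul_le_mul_of_nonneg_left (hw₁ t ht) (norm_nonneg _)
      have h4 := abs_le.1 (h2.trans h3)
      linarith [h4.2]
    have hb5 : ξ * ⟪ζ t, b t⟫ ≥ ξhat t * ⟪ζ t, b t⟫ - |⟪ζ t, b t⟫| * η := by
      have : ξ * ⟪ζ t, b t⟫ - ξhat t * ⟪ζ t, b t⟫ = (ξ - ξhat t) * ⟪ζ t, b t⟫ := by ring
      have h2 : |(ξ - ξhat t) * ⟪ζ t, b t⟫| ≤ η * |⟪ζ t, b t⟫| := by
        rw [abs_mul]
        exact mul_le_mul_of_nonneg_right (hξ t ht) (abs_nonneg _)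
      have h4 := (abs_le.1 h2).1
      linarith [this, h4]
    have hdζsq : (0:ℝ) ≤ ⟪dζ t, dζ t⟫ := real_inner_self_nonneg
    -- ι-scaled bound
    have hι2 : ι * (⟪ζ t, dζ t⟫) ≥ ι * (⟪ζ t, F t⟫ + ⟪ζ t, Y t (θhat t)⟫
        - ‖(ContinuousLinearMap.adjoint (Y t)) (ζ t)‖ * ν - ‖ζ t‖ * ρv) := by
      apply mul_le_mul_of_nonneg_left _ hι.le
      rw [hexp2]
      linarith [hb2, hb4]
    -- conclude
    have hαψ : α (ψ t) ≤ 0 := by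
      have := hα_mono hψt.le
      rwa [hα0] at this
    rw [hexp]
    simp only [hψ] at hadm' hαψ
    nlinarith [hadm', hαψ, hb1, hb3, hb5, hι2, hdζsq]
  -- forward invariance of h
  have hhnonneg : ∀ t ≥ (0:ℝ), 0 ≤ h t := by
    apply nonneg_of_deriv_nonneg_of_neg h _ hhder _ h0
    intro t ht hht
    have hψt := hψnonneg t ht
    simp only [hψ, hh] at *
    nlinarith
  intro t ht
  have := hhnonneg t ht
  simp only [hh] at this
  nlinarith [norm_nonneg (ζ t)]
end

section
/- Let n, m, p ∈ ℕ, constants R > 0, ι > 0, and bounds ν, η, ρ_v, ρ_a ≥ 0; let α : ℝ → ℝ be locally Lipschitz, nondecreasing, with α(0) = 0. Suppose ζ : ℝ → ℝⁿ is twice differentiable on [0,∞) and there are functions F, D, b, G, w₁, w₂ : ℝ → ℝⁿ, Y, Ẏ : ℝ → (ℝᵖ → ℝⁿ linear), θ̂ : ℝ → ℝᵖ, ξ̂ : ℝ → ℝ and constants θ ∈ ℝᵖ, ξ ∈ ℝ such that for all t ≥ 0: ζ'(t) = F(t) + Y(t)θ − w₁(t), ζ''(t) = D(t) + Ẏ(t)θ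 + ξ·b(t) + G(t) − w₂(t), ‖θ − θ̂(t)‖ ≤ ν, |ξ − ξ̂(t)| ≤ η, ‖w₁(t)‖ ≤ ρ_v, ‖w₂(t)‖ ≤ ρ_a, and −2‖ζ'(t)‖² − 2⟪ζ(t), D(t)⟫ − 2⟪ζ(t), Ẏ(t)θ̂(t)⟫ − 2‖Ẏ(t)*ζ(t)‖·ν − 2‖ζ(t)‖·ρ_a − 2ξ̂(t)·⟪ζ(t), b(t)⟫ − 2|⟪ζ(t), b(t)⟫|·η − 2⟪ζ(t), G(t)⟫ − ι·(2⟪ζ(t), F(t)⟫ + 2⟪ζ(t), Y(t)θ̂(t)⟫) − 2ι·‖Y(t)*ζ(t)‖·ν − 2ι·‖ζ(t)‖·ρ_v + α(−2⟪ζ(t), ζ'(t)⟫ + ι·(R² − ‖ζ(t)‖²)) ≥ 0. If R² − ‖ζ(0)‖² ≥ 0 and −2⟪ζ(0), ζ'(0)⟫ + ι·(R² − ‖ζ(0)‖²) ≥ 0, then ‖ζ(t)‖ ≤ R for all t ≥ 0. -/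
open scoped RealInnerProductSpace

lemma nonneg_invariant_aux {y y' : ℝ → ℝ}
    (hy : ∀ t ≥ (0:ℝ), HasDerivAt y (y' t) t)
    (h0 : 0 ≤ y 0)
    (hd : ∀ t > (0:ℝ), y t ≤ 0 → 0 ≤ y' t) :
    ∀ t ≥ (0:ℝ), 0 ≤ y t := by
  intro t₀ ht₀
  by_contra hneg
  push_neg at hneg
  have ht₀pos : 0 < t₀ := by
    rcases eq_or_lt_of_le ht₀ with h | h
    · exfalso; rw [← h] at hneg; linarith
    · exact h
  set S : Set ℝ := {t | t ∈ Set.Icc (0:ℝ) t₀ ∧ 0 ≤ y t} with hSdef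
  have h0S : (0:ℝ) ∈ S := ⟨⟨le_refl 0, ht₀pos.le⟩, h0⟩
  have hSne : S.Nonempty := ⟨0, h0S⟩
  have hSbdd : BddAbove S := ⟨t₀, fun x hx => hx.1.2⟩
  set s := sSup S with hs
  have hs_le : s ≤ t₀ := csSup_le hSne fun x hx => hx.1.2
  have hs_ge : (0:ℝ) ≤ s := le_csSup hSbdd h0S
  have hs_cl : s ∈ closure S := csSup_mem_closure hSne hSbdd
  have hys : 0 ≤ y s := by
    have hcont : ContinuousAt y s := (hy s hs_ge).continuousAt
    have hten : Filter.Tendsto y (nhdsWithin s S) (nhds (y s)) :=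
      hcont.continuousWithinAt.tendsto
    have hne : (nhdsWithin s S).NeBot := mem_closure_iff_nhdsWithin_neBot.mp hs_cl
    exact ge_of_tendsto hten (Filter.eventually_inf_principal.mpr
      (Filter.Eventually.of_forall fun x hx => hx.2))
  have hs_lt : s < t₀ := by
    rcases eq_or_lt_of_le hs_le with h | h
    · exfalso; rw [h] at hys; linarith
    · exact h
  have hyneg : ∀ t, s < t → t ≤ t₀ → y t < 0 := by
    intro t hst htt
    by_contra hc
    push_neg at hc
    have : t ∈ S := ⟨⟨le_trans hs_ge hst.le, htt⟩, hc⟩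
    exact absurd (le_csSup hSbdd this) (not_le.mpr hst)
  have hmono : MonotoneOn y (Set.Icc s t₀) := by
    apply monotoneOn_of_deriv_nonneg (convex_Icc s t₀)
    · intro x hx
      exact ((hy x (le_trans hs_ge hx.1)).continuousAt).continuousWithinAt
    · intro x hx
      rw [interior_Icc] at hx
      exact ((hy x (le_trans hs_ge hx.1.le)).differentiableAt).differentiableWithinAt
    · intro x hx
      rw [interior_Icc] at hx
      have hx0 : 0 < x := lt_of_le_of_lt hs_ge hx.1
      rw [(hy x hx0.le).deriv]
      exact hd x hx0 (hyneg x hx.1 hx.2.le).le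
  have := hmono ⟨le_refl s, hs_lt.le⟩ ⟨hs_lt.le, le_refl t₀⟩ hs_lt.le
  linarith

set_option maxHeartbeats 1000000

/-- Sensing-range CBF lemma (Lemma 4): with `ζ` the pursuer–target relative position
and `h_s = R² - ‖ζ‖²` the relative-degree-2 CBF, if the robust admissibility
condition holds for all `t ≥ 0` and `h_s(0) ≥ 0`, `ḣ_s(0) + ι·h_s(0) ≥ 0`, then
`‖ζ(t)‖ ≤ R` for all `t ≥ 0`. -/
theorem sensing_range_forward_invariance (n m p : ℕ)
    (R ι ν η ρv ρa : ℝ)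
    (hR : R > 0) (hι : ι > 0)
    (hν : 0 ≤ ν) (hη : 0 ≤ η) (hρv : 0 ≤ ρv) (hρa : 0 ≤ ρa)
    (α : ℝ → ℝ) (hα_lip : LocallyLipschitz α) (hα_mono : Monotone α) (hα0 : α 0 = 0)
    (ζ dζ : ℝ → EuclideanSpace ℝ (Fin n))
    (F D b G w₁ w₂ : ℝ → EuclideanSpace ℝ (Fin n))
    (Y Ydot : ℝ → (EuclideanSpace ℝ (Fin p) →L[ℝ] EuclideanSpace ℝ (Fin n)))
    (θhat : ℝ → EuclideanSpace ℝ (Fin p)) (ξhat : ℝ → ℝ)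
    (θ : EuclideanSpace ℝ (Fin p)) (ξ : ℝ)
    (hζ' : ∀ t ≥ (0:ℝ), HasDerivAt ζ (dζ t) t)
    (hζ'eq : ∀ t ≥ (0:ℝ), dζ t = F t + Y t θ - w₁ t)
    (hζ'' : ∀ t ≥ (0:ℝ), HasDerivAt dζ (D t + Ydot t θ + ξ • b t + G t - w₂ t) t)
    (hθ : ∀ t ≥ (0:ℝ), ‖θ - θhat t‖ ≤ ν)
    (hξ : ∀ t ≥ (0:ℝ), |ξ - ξhat t| ≤ η)
    (hw₁ : ∀ t ≥ (0:ℝ), ‖w₁ t‖ ≤ ρv)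
    (hw₂ : ∀ t ≥ (0:ℝ), ‖w₂ t‖ ≤ ρa)
    (hadm : ∀ t ≥ (0:ℝ),
      -2 * ‖dζ t‖ ^ 2 - 2 * ⟪ζ t, D t⟫ - 2 * ⟪ζ t, Ydot t (θhat t)⟫
        - 2 * ‖(ContinuousLinearMap.adjoint (Ydot t)) (ζ t)‖ * ν - 2 * ‖ζ t‖ * ρa
        - 2 * ξhat t * ⟪ζ t, b t⟫ - 2 * |⟪ζ t, b t⟫| * η - 2 * ⟪ζ t, G t⟫
        - ι * (2 * ⟪ζ t, F t⟫ + 2 * ⟪ζ t, Y t (θhat t)⟫)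
        - 2 * ι * ‖(ContinuousLinearMap.adjoint (Y t)) (ζ t)‖ * ν
        - 2 * ι * ‖ζ t‖ * ρv
        + α (-2 * ⟪ζ t, dζ t⟫ + ι * (R ^ 2 - ‖ζ t‖ ^ 2)) ≥ 0)
    (h0 : R ^ 2 - ‖ζ 0‖ ^ 2 ≥ 0)
    (h0' : -2 * ⟪ζ 0, dζ 0⟫ + ι * (R ^ 2 - ‖ζ 0‖ ^ 2) ≥ 0) :
    ∀ t ≥ (0:ℝ), ‖ζ t‖ ≤ R := by
  -- the CBF and the HOCBF chained function
  set h : ℝ → ℝ := fun t => R ^ 2 - ‖ζ t‖ ^ 2 with hhdef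
  set ψ : ℝ → ℝ := fun t => -2 * ⟪ζ t, dζ t⟫ + ι * (R ^ 2 - ‖ζ t‖ ^ 2) with hψdef
  -- derivative of ‖ζ‖²-free form: h' = -2⟪ζ, dζ⟫
  have hfun : h = fun t => R ^ 2 - ⟪ζ t, ζ t⟫ := by
    funext t; rw [real_inner_self_eq_norm_sq]
  have hderiv : ∀ t ≥ (0:ℝ), HasDerivAt h (-(2 * ⟪ζ t, dζ t⟫)) t := by
    intro t ht
    rw [hfun]
    have hi := (hζ' t ht).inner ℝ (hζ' t ht)
    have := (hasDerivAt_const t (R ^ 2)).sub hi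
    refine this.congr_deriv ?_
    rw [real_inner_comm (ζ t) (dζ t)]; ring
  -- derivative of ψ
  set ψ' : ℝ → ℝ := fun t =>
    -2 * (⟪ζ t, D t + Ydot t θ + ξ • b t + G t - w₂ t⟫ + ‖dζ t‖ ^ 2)
      - ι * (2 * ⟪ζ t, dζ t⟫) with hψ'def
  have hψderiv : ∀ t ≥ (0:ℝ), HasDerivAt ψ (ψ' t) t := by
    intro t ht
    have hi := (hζ' t ht).inner ℝ (hζ'' t ht)
    have h1 := hi.const_mul (-2 : ℝ)
    have h2 := (hderiv t ht).const_mul ι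
    have := h1.add h2
    refine this.congr_deriv ?_
    symm
    show -2 * (⟪ζ t, D t + Ydot t θ + ξ • b t + G t - w₂ t⟫ + ‖dζ t‖ ^ 2)
      - ι * (2 * ⟪ζ t, dζ t⟫) = _
    rw [real_inner_self_eq_norm_sq]
    ring
  -- key robust bound: ψ' t + α (ψ t) ≥ 0
  have key : ∀ t ≥ (0:ℝ), 0 ≤ ψ' t + α (ψ t) := by
    intro t ht
    have hexp : ⟪ζ t, D t + Ydot t θ + ξ • b t + G t - w₂ t⟫
        = ⟪ζ t, D t⟫ + ⟪ζ t, Ydot t θ⟫ + ξ * ⟪ζ t, b t⟫ + ⟪ζ t, G t⟫ - ⟪ζ t, w₂ t⟫ := by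
      rw [inner_sub_right, inner_add_right, inner_add_right, inner_add_right,
        real_inner_smul_right]
    -- bound (a): adaptive term for Ydot
    have hb1 : ⟪ζ t, Ydot t θ⟫ ≤ ⟪ζ t, Ydot t (θhat t)⟫
        + ‖(ContinuousLinearMap.adjoint (Ydot t)) (ζ t)‖ * ν := by
      have he : ⟪ζ t, Ydot t θ⟫ - ⟪ζ t, Ydot t (θhat t)⟫
          = ⟪(ContinuousLinearMap.adjoint (Ydot t)) (ζ t), θ - θhat t⟫ := by
        rw [ContinuousLinearMap.adjoint_inner_left, map_sub, inner_sub_right]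
      have hcs := real_inner_le_norm ((ContinuousLinearMap.adjoint (Ydot t)) (ζ t)) (θ - θhat t)
      have hmu := mul_le_mul_of_nonneg_left (hθ t ht)
        (norm_nonneg ((ContinuousLinearMap.adjoint (Ydot t)) (ζ t)))
      linarith
    -- bound (b): adaptive term for ξ
    have hb2 : ξ * ⟪ζ t, b t⟫ ≤ ξhat t * ⟪ζ t, b t⟫ + |⟪ζ t, b t⟫| * η := by
      have h1 : (ξ - ξhat t) * ⟪ζ t, b t⟫ ≤ |ξ - ξhat t| * |⟪ζ t, b t⟫| := by
        calc (ξ - ξhat t) * ⟪ζ t, b t⟫ ≤ |(ξ - ξhat t) * ⟪ζ t, b t⟫| := le_abs_self _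
        _ = |ξ - ξhat t| * |⟪ζ t, b t⟫| := abs_mul _ _
      have h2 : |ξ - ξhat t| * |⟪ζ t, b t⟫| ≤ η * |⟪ζ t, b t⟫| :=
        mul_le_mul_of_nonneg_right (hξ t ht) (abs_nonneg _)
      nlinarith
    -- bound (c): disturbance w₂
    have hb3 : -⟪ζ t, w₂ t⟫ ≤ ‖ζ t‖ * ρa := by
      have hcs := real_inner_le_norm (ζ t) (-(w₂ t))
      rw [inner_neg_right, norm_neg] at hcs
      have := mul_le_mul_of_nonneg_left (hw₂ t ht) (norm_nonneg (ζ t))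
      linarith
    -- bound (d): velocity channel
    have hb4 : ⟪ζ t, dζ t⟫ ≤ ⟪ζ t, F t⟫ + ⟪ζ t, Y t (θhat t)⟫
        + ‖(ContinuousLinearMap.adjoint (Y t)) (ζ t)‖ * ν + ‖ζ t‖ * ρv := by
      rw [hζ'eq t ht, inner_sub_right, inner_add_right]
      have he : ⟪ζ t, Y t θ⟫ - ⟪ζ t, Y t (θhat t)⟫
          = ⟪(ContinuousLinearMap.adjoint (Y t)) (ζ t), θ - θhat t⟫ := by
        rw [ContinuousLinearMap.adjoint_inner_left, map_sub, inner_sub_right]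
      have hcs := real_inner_le_norm ((ContinuousLinearMap.adjoint (Y t)) (ζ t)) (θ - θhat t)
      have hmu := mul_le_mul_of_nonneg_left (hθ t ht)
        (norm_nonneg ((ContinuousLinearMap.adjoint (Y t)) (ζ t)))
      have hcs1 := real_inner_le_norm (ζ t) (-(w₁ t))
      rw [inner_neg_right, norm_neg] at hcs1
      have hmu1 := mul_le_mul_of_nonneg_left (hw₁ t ht) (norm_nonneg (ζ t))
      linarith
    have hb4' := mul_le_mul_of_nonneg_left hb4 hι.le
    have hA := hadm t ht
    have hαeq : α (-2 * ⟪ζ t, dζ t⟫ + ι * (R ^ 2 - ‖ζ t‖ ^ 2)) = α (ψ t) := rfl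
    rw [hαeq] at hA
    have hψ'eq : ψ' t = -2 * (⟪ζ t, D t⟫ + ⟪ζ t, Ydot t θ⟫ + ξ * ⟪ζ t, b t⟫
        + ⟪ζ t, G t⟫ - ⟪ζ t, w₂ t⟫ + ‖dζ t‖ ^ 2) - ι * (2 * ⟪ζ t, dζ t⟫) := by
      simp only [hψ'def]; rw [hexp]
    rw [hψ'eq]
    linarith [hA, hb1, hb2, hb3, hb4']
  -- ψ stays nonnegative
  have hψ0 : 0 ≤ ψ 0 := h0'
  have hψnn : ∀ t ≥ (0:ℝ), 0 ≤ ψ t := by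
    apply nonneg_invariant_aux hψderiv hψ0
    intro t ht hle
    have hαle : α (ψ t) ≤ 0 := by
      calc α (ψ t) ≤ α 0 := hα_mono hle
      _ = 0 := hα0
    have := key t ht.le
    linarith
  -- h stays nonnegative
  have hhnn : ∀ t ≥ (0:ℝ), 0 ≤ h t := by
    apply nonneg_invariant_aux hderiv h0
    intro t ht hle
    have hψt := hψnn t ht.le
    have heq : ψ t = -(2 * ⟪ζ t, dζ t⟫) + ι * h t := by
      simp only [hψdef, hhdef]; ring
    have hmul : ι * h t ≤ 0 := mul_nonpos_of_nonneg_of_nonpos hι.le hle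
    linarith
  -- conclude
  intro t ht
  have := hhnn t ht
  simp only [hhdef] at this
  nlinarith [norm_nonneg (ζ t)]
end

section
/- Let H be a real Hilbert space and let δ > 0, B > 0. The map Φ : {(w, π, b) ∈ H × H × ℝ : ‖w‖ ≥ δ, ‖π‖ ≤ B, |b| ≤ B} → H defined by Φ(w, π, b) = π + (max(0, b − ⟪w, π⟫)/‖w‖²)·w is Lipschitz continuous on its domain. -/
open scoped RealInnerProductSpace NNReal

lemma aux_inversion {H : Type*} [NormedAddCommGroup H] [InnerProductSpace ℝ H]
    {a b : H} (ha : a ≠ 0) (hb : b ≠ 0) :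
    ‖(‖a‖ ^ 2)⁻¹ • a - (‖b‖ ^ 2)⁻¹ • b‖ = ‖a - b‖ / (‖a‖ * ‖b‖) := by
  have ha' : ‖a‖ ≠ 0 := norm_ne_zero_iff.mpr ha
  have hb' : ‖b‖ ≠ 0 := norm_ne_zero_iff.mpr hb
  have h1 : ‖(‖a‖ ^ 2)⁻¹ • a - (‖b‖ ^ 2)⁻¹ • b‖ ^ 2 = (‖a - b‖ / (‖a‖ * ‖b‖)) ^ 2 := by
    rw [@norm_sub_sq_real, div_pow, @norm_sub_sq_real]
    simp only [norm_smul, real_inner_smul_left, real_inner_smul_right, Real.norm_eq_abs,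
      abs_inv, abs_pow, abs_norm, mul_pow, inv_pow]
    field_simp
    ring
  have h2 : (0:ℝ) ≤ ‖a - b‖ / (‖a‖ * ‖b‖) := by positivity
  nlinarith [norm_nonneg ((‖a‖ ^ 2)⁻¹ • a - (‖b‖ ^ 2)⁻¹ • b)]

/-- Lipschitz continuity of the single-constraint CBF-QP solution
`Φ(w, π, b) = π + (max 0 (b - ⟪w, π⟫)/‖w‖²) • w` on the region where the
constraint direction `w` is bounded away from zero and `π`, `b` are bounded. -/
theorem cbf_qp_solution_lipschitz {H : Type*} [NormedAddCommGroup H]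
    [InnerProductSpace ℝ H] (δ B : ℝ) (hδ : δ > 0) (hB : B > 0) :
    ∃ K : ℝ≥0, LipschitzOnWith K
      (fun q : H × H × ℝ => q.2.1 + (max 0 (q.2.2 - ⟪q.1, q.2.1⟫) / ‖q.1‖ ^ 2) • q.1)
      {q : H × H × ℝ | δ ≤ ‖q.1‖ ∧ ‖q.2.1‖ ≤ B ∧ |q.2.2| ≤ B} := by
  refine ⟨⟨2 + 1/δ + 2*B/δ + B/δ^2, by positivity⟩, ?_⟩
  apply lipschitzOnWith_iff_dist_le_mul.mpr
  rintro ⟨w, π, b⟩ ⟨hw, hπ, hb⟩ ⟨w', π', b'⟩ ⟨hw', hπ', hb'⟩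
  simp only [NNReal.coe_mk]
  set d := dist (⟨w, π, b⟩ : H × H × ℝ) (⟨w', π', b'⟩ : H × H × ℝ) with hd
  have hd0 : 0 ≤ d := dist_nonneg
  have hdw : ‖w - w'‖ ≤ d := by
    rw [← dist_eq_norm]; exact le_trans (le_max_left _ _) le_rfl
  have hdπ : ‖π - π'‖ ≤ d := by
    rw [← dist_eq_norm]
    exact le_trans (le_max_left _ _) (le_max_right _ _)
  have hdb : |b - b'| ≤ d := by
    rw [← Real.dist_eq]
    exact le_trans (le_max_right _ _) (le_max_right _ _)
  have hwn : ‖w‖ ≠ 0 := ne_of_gt (lt_of_lt_of_le hδ hw)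
  have hwn' : ‖w'‖ ≠ 0 := ne_of_gt (lt_of_lt_of_le hδ hw')
  have hw0 : w ≠ 0 := norm_ne_zero_iff.mp hwn
  have hw0' : w' ≠ 0 := norm_ne_zero_iff.mp hwn'
  set c : ℝ := max 0 (b - ⟪w, π⟫) with hc
  set c' : ℝ := max 0 (b' - ⟪w', π'⟫) with hc'
  have hcc' : |c - c'| ≤ |b - b'| + ‖w‖ * ‖π - π'‖ + B * ‖w - w'‖ := by
    have h1 : |c - c'| ≤ |(b - ⟪w, π⟫) - (b' - ⟪w', π'⟫)| := by
      rw [hc, hc', max_comm 0 (b - ⟪w, π⟫), max_comm 0 (b' - ⟪w', π'⟫)]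
      exact abs_max_sub_max_le_abs _ _ _
    have h2 : (b - ⟪w, π⟫) - (b' - ⟪w', π'⟫) = (b - b') - (⟪w, π - π'⟫ + ⟪w - w', π'⟫) := by
      simp [inner_sub_left, inner_sub_right]; ring
    have h3 : |⟪w, π - π'⟫| ≤ ‖w‖ * ‖π - π'‖ := abs_real_inner_le_norm _ _
    have h4 : |⟪w - w', π'⟫| ≤ ‖w - w'‖ * ‖π'‖ := abs_real_inner_le_norm _ _
    have h5 : ‖w - w'‖ * ‖π'‖ ≤ B * ‖w - w'‖ := by
      rw [mul_comm]; exact mul_le_mul_of_nonneg_right hπ' (norm_nonneg _)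
    calc |c - c'| ≤ |(b - b') - (⟪w, π - π'⟫ + ⟪w - w', π'⟫)| := by rw [← h2]; exact h1
      _ ≤ |b - b'| + |⟪w, π - π'⟫ + ⟪w - w', π'⟫| := abs_sub _ _
      _ ≤ |b - b'| + (|⟪w, π - π'⟫| + |⟪w - w', π'⟫|) := by
          gcongr; exact abs_add_le _ _
      _ ≤ |b - b'| + (‖w‖ * ‖π - π'‖ + B * ‖w - w'‖) := by gcongr; linarith [h4, h5]
      _ = _ := by ring
  have hcb' : c' ≤ B + B * ‖w'‖ := by
    have : b' - ⟪w', π'⟫ ≤ |b'| + ‖w'‖ * ‖π'‖ := by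
      have := abs_real_inner_le_norm w' π'
      have := le_abs_self b'
      nlinarith [neg_abs_le ⟪w', π'⟫, abs_nonneg ⟪w', π'⟫]
    have hB' : |b'| + ‖w'‖ * ‖π'‖ ≤ B + B * ‖w'‖ := by
      have := mul_le_mul_of_nonneg_left hπ' (norm_nonneg w')
      have : ‖w'‖ * ‖π'‖ ≤ ‖w'‖ * B := this
      linarith [this, hb']
    exact max_le (by positivity) (le_trans ‹_› hB')
  -- decompose
  have key : (fun q : H × H × ℝ => q.2.1 + (max 0 (q.2.2 - ⟪q.1, q.2.1⟫) / ‖q.1‖ ^ 2) • q.1)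
      (⟨w, π, b⟩ : H × H × ℝ) -
      (fun q : H × H × ℝ => q.2.1 + (max 0 (q.2.2 - ⟪q.1, q.2.1⟫) / ‖q.1‖ ^ 2) • q.1)
      (⟨w', π', b'⟩ : H × H × ℝ)
      = (π - π') + (c - c') • ((‖w‖ ^ 2)⁻¹ • w)
        + c' • ((‖w‖ ^ 2)⁻¹ • w - (‖w'‖ ^ 2)⁻¹ • w') := by
    simp only [← hc, ← hc', div_eq_mul_inv, mul_smul]
    module
  rw [dist_eq_norm, key]
  have n1 : ‖(‖w‖ ^ 2)⁻¹ • w‖ = 1 / ‖w‖ := by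
    rw [norm_smul, Real.norm_eq_abs, abs_inv, abs_pow, abs_norm]
    field_simp [pow_two]
  have n2 : ‖(‖w‖ ^ 2)⁻¹ • w - (‖w'‖ ^ 2)⁻¹ • w'‖ = ‖w - w'‖ / (‖w‖ * ‖w'‖) :=
    aux_inversion hw0 hw0'
  have t2 : ‖(c - c') • ((‖w‖ ^ 2)⁻¹ • w)‖ ≤ (1/δ) * |b - b'| + ‖π - π'‖ + (B/δ) * ‖w - w'‖ := by
    rw [norm_smul, Real.norm_eq_abs, n1]
    have hδw : 1 / ‖w‖ ≤ 1 / δ := by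
      apply one_div_le_one_div_of_le hδ hw
    have hwpos : (0:ℝ) < ‖w‖ := lt_of_lt_of_le hδ hw
    calc |c - c'| * (1 / ‖w‖) ≤ (|b - b'| + ‖w‖ * ‖π - π'‖ + B * ‖w - w'‖) * (1 / ‖w‖) := by
          gcongr
      _ = |b - b'| / ‖w‖ + ‖π - π'‖ + B * ‖w - w'‖ / ‖w‖ := by field_simp
      _ ≤ |b - b'| / δ + ‖π - π'‖ + B * ‖w - w'‖ / δ := by
          gcongr <;> first | positivity | exact abs_nonneg _
      _ = (1/δ) * |b - b'| + ‖π - π'‖ + (B/δ) * ‖w - w'‖ := by ring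
  have t3 : ‖c' • ((‖w‖ ^ 2)⁻¹ • w - (‖w'‖ ^ 2)⁻¹ • w')‖ ≤ (B/δ^2 + B/δ) * ‖w - w'‖ := by
    rw [norm_smul, Real.norm_eq_abs, n2]
    have hc'0 : 0 ≤ c' := le_max_left _ _
    rw [abs_of_nonneg hc'0]
    have hwpos : (0:ℝ) < ‖w‖ := lt_of_lt_of_le hδ hw
    have hwpos' : (0:ℝ) < ‖w'‖ := lt_of_lt_of_le hδ hw'
    calc c' * (‖w - w'‖ / (‖w‖ * ‖w'‖)) ≤ (B + B * ‖w'‖) * (‖w - w'‖ / (‖w‖ * ‖w'‖)) := by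
          gcongr
      _ = B * ‖w - w'‖ / (‖w‖ * ‖w'‖) + B * ‖w - w'‖ / ‖w‖ := by field_simp
      _ ≤ B * ‖w - w'‖ / (δ * δ) + B * ‖w - w'‖ / δ := by
          gcongr <;> positivity
      _ = (B/δ^2 + B/δ) * ‖w - w'‖ := by ring
  calc ‖(π - π') + (c - c') • ((‖w‖ ^ 2)⁻¹ • w)
        + c' • ((‖w‖ ^ 2)⁻¹ • w - (‖w'‖ ^ 2)⁻¹ • w')‖
      ≤ ‖π - π'‖ + ‖(c - c') • ((‖w‖ ^ 2)⁻¹ • w)‖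
        + ‖c' • ((‖w‖ ^ 2)⁻¹ • w - (‖w'‖ ^ 2)⁻¹ • w')‖ := by
        exact le_trans (norm_add_le _ _) (by gcongr; exact norm_add_le _ _)
    _ ≤ ‖π - π'‖ + ((1/δ) * |b - b'| + ‖π - π'‖ + (B/δ) * ‖w - w'‖)
        + (B/δ^2 + B/δ) * ‖w - w'‖ := by gcongr
    _ ≤ d + ((1/δ) * d + d + (B/δ) * d) + (B/δ^2 + B/δ) * d := by
        gcongr <;> positivity
    _ = (2 + 1/δ + 2*B/δ + B/δ^2) * d := by ring
end
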